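/- Let X and Y be complex Banach spaces and let f : X → Y be holomorphic on B_X and uniformly continuous on the closed unit ball of X. Then the following are equivalent: (1) f attains its v-norm; (2) there exists s₀ ∈ [0,1) such that ‖f‖_v = (1 − s₀²)‖f‖_{s₀} and f attains its s₀-norm, i.e. there is x₀ with ‖x₀‖ ≤ s₀ and ‖f(x₀)‖ = ‖f‖_{s₀}. -/

import Mathlib

open Filter Topology Metric

/-- The weighted ("v-") norm: `sup_{‖x‖<1} (1 - ‖x‖²)‖f x‖`. -/
noncomputable def vNorm {X Y : Type*} [NormedAddCommGroup X] [NormedAddCommGroup Y]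
    (f : X → Y) : ℝ :=
  sSup ((fun x => (1 - ‖x‖ ^ 2) * ‖f x‖) '' {x : X | ‖x‖ < 1})

/-- The `s`-norm: `sup_{‖x‖<1} ‖f (s • x)‖`. -/
noncomputable def sNorm {X Y : Type*} [NormedAddCommGroup X] [NormedSpace ℂ X]
    [NormedAddCommGroup Y] (s : ℝ) (f : X → Y) : ℝ :=
  sSup ((fun x => ‖f ((s : ℂ) • x)‖) '' {x : X | ‖x‖ < 1})

/-- The supremum norm over the open unit ball. -/
noncomputable def supNorm {X Y : Type*} [NormedAddCommGroup X] [NormedAddCommGroup Y]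
    (f : X → Y) : ℝ :=
  sSup ((fun x => ‖f x‖) '' {x : X | ‖x‖ < 1})

/-- `P` is a continuous `N`-homogeneous polynomial: `P x = A(x, …, x)` for a continuous
`N`-linear map `A`. -/
def IsHomPoly {X Y : Type*} [NormedAddCommGroup X] [NormedSpace ℂ X]
    [NormedAddCommGroup Y] [NormedSpace ℂ Y] (N : ℕ) (P : X → Y) : Prop :=
  ∃ A : ContinuousMultilinearMap ℂ (fun _ : Fin N => X) Y, ∀ x, P x = A (fun _ => x)

/-- `P` is a polynomial of degree at most `N`: a sum of continuous `k`-homogeneous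
polynomials for `k = 0, …, N`. -/
def IsPolyDeg {X Y : Type*} [NormedAddCommGroup X] [NormedSpace ℂ X]
    [NormedAddCommGroup Y] [NormedSpace ℂ Y] (N : ℕ) (P : X → Y) : Prop :=
  ∃ Pk : ℕ → X → Y, (∀ k, k ≤ N → IsHomPoly k (Pk k)) ∧
    ∀ x, P x = ∑ k ∈ Finset.range (N + 1), Pk k x

/-- `f` attains its `s`-norm. -/
def AttainsS {X Y : Type*} [NormedAddCommGroup X] [NormedSpace ℂ X]
    [NormedAddCommGroup Y] (s : ℝ) (f : X → Y) : Prop :=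
  ∃ x₀ : X, ‖x₀‖ ≤ s ∧ ‖f x₀‖ = sNorm s f

/-- `f` attains its `v`-norm. -/
def AttainsV {X Y : Type*} [NormedAddCommGroup X] [NormedAddCommGroup Y]
    (f : X → Y) : Prop :=
  ∃ x₀ : X, ‖x₀‖ ≤ 1 ∧ (1 - ‖x₀‖ ^ 2) * ‖f x₀‖ = vNorm f


lemma chain_bound {X Y : Type*} [NormedAddCommGroup X] [NormedSpace ℂ X]
    [NormedAddCommGroup Y]
    (f : X → Y) (hu : UniformContinuousOn f (Metric.closedBall (0 : X) 1)) :
    ∃ C : ℝ, 0 ≤ C ∧ ∀ x ∈ Metric.closedBall (0 : X) 1, ‖f x‖ ≤ C := by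
  obtain ⟨δ, hδ, H⟩ := Metric.uniformContinuousOn_iff.mp hu 1 one_pos
  obtain ⟨n, hn⟩ := exists_nat_gt (1 / δ)
  have hn0 : 0 < (n : ℝ) := lt_of_le_of_lt (by positivity) hn
  refine ⟨‖f 0‖ + n, by positivity, ?_⟩
  intro x hx
  rw [Metric.mem_closedBall, dist_zero_right] at hx
  have hmem : ∀ r : ℝ, 0 ≤ r → r ≤ 1 → ((r : ℂ) • x) ∈ Metric.closedBall (0 : X) 1 := by
    intro r hr0 hr1
    rw [Metric.mem_closedBall, dist_zero_right, norm_smul, Complex.norm_real,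
      Real.norm_of_nonneg hr0]
    calc r * ‖x‖ ≤ 1 * 1 := mul_le_mul hr1 hx (norm_nonneg x) one_pos.le
      _ = 1 := one_mul 1
  have key : ∀ k : ℕ, k ≤ n → ‖f ((((k : ℝ) / n : ℝ) : ℂ) • x)‖ ≤ ‖f 0‖ + k := by
    intro k
    induction k with
    | zero => intro _; simp
    | succ k ih =>
      intro hk
      have hk' : k ≤ n := Nat.le_of_succ_le hk
      have hkn : ((k : ℝ) + 1) / n ≤ 1 := by
        rw [div_le_one hn0]; exact_mod_cast hk
      have hkn' : (k : ℝ) / n ≤ 1 := by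
        rw [div_le_one hn0]; exact_mod_cast hk'
      have ha := hmem ((k : ℝ) / n) (by positivity) hkn'
      have hb := hmem (((k : ℝ) + 1) / n) (by positivity) hkn
      have hdist : dist (((((k : ℝ) + 1) / n : ℝ) : ℂ) • x)
          ((((k : ℝ) / n : ℝ) : ℂ) • x) < δ := by
        rw [dist_eq_norm, ← sub_smul]
        have he : ((((k : ℝ) + 1) / n : ℝ) : ℂ) - (((k : ℝ) / n : ℝ) : ℂ)
            = (((1 : ℝ) / n : ℝ) : ℂ) := by
          push_cast; ring
        rw [he, norm_smul, Complex.norm_real, Real.norm_of_nonneg (by positivity)]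
        have h2 : 1 / (n : ℝ) < δ := by
          rw [div_lt_iff₀ hn0]
          rw [div_lt_iff₀ hδ] at hn
          nlinarith
        calc 1 / (n : ℝ) * ‖x‖ ≤ 1 / n * 1 :=
              mul_le_mul_of_nonneg_left hx (by positivity)
          _ = 1 / n := mul_one _
          _ < δ := h2
      have hstep := H _ hb _ ha hdist
      rw [dist_eq_norm] at hstep
      have hn2 := norm_sub_norm_le (f (((((k : ℝ) + 1) / n : ℝ) : ℂ) • x))
        (f ((((k : ℝ) / n : ℝ) : ℂ) • x))
      have hih := ih hk'
      have hgoal : ‖f (((((k : ℝ) + 1) / n : ℝ) : ℂ) • x)‖ ≤ ‖f 0‖ + ((k : ℝ) + 1) := by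
        linarith
      have hcast : (((k + 1 : ℕ) : ℝ)) = (k : ℝ) + 1 := by push_cast; ring
      rw [hcast]
      exact hgoal
  have hfin := key n le_rfl
  rw [div_self hn0.ne', Complex.ofReal_one, one_smul] at hfin
  exact hfin

theorem stmt1' {X Y : Type*} [NormedAddCommGroup X] [NormedSpace ℂ X] [CompleteSpace X]
    [NormedAddCommGroup Y] [NormedSpace ℂ Y] [CompleteSpace Y]
    (f : X → Y) (hf : DifferentiableOn ℂ f (Metric.ball (0 : X) 1))
    (hu : UniformContinuousOn f (Metric.closedBall (0 : X) 1)) :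
    (∃ x₀ : X, ‖x₀‖ ≤ 1 ∧ (1 - ‖x₀‖ ^ 2) * ‖f x₀‖ =
      sSup ((fun x => (1 - ‖x‖ ^ 2) * ‖f x‖) '' {x : X | ‖x‖ < 1})) ↔
      ∃ s₀ : ℝ, 0 ≤ s₀ ∧ s₀ < 1 ∧
        sSup ((fun x => (1 - ‖x‖ ^ 2) * ‖f x‖) '' {x : X | ‖x‖ < 1})
          = (1 - s₀ ^ 2) * sSup ((fun x => ‖f ((s₀ : ℂ) • x)‖) '' {x : X | ‖x‖ < 1}) ∧
        ∃ x₁ : X, ‖x₁‖ ≤ s₀ ∧ ‖f x₁‖ =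
          sSup ((fun x => ‖f ((s₀ : ℂ) • x)‖) '' {x : X | ‖x‖ < 1}) := by
  obtain ⟨C, hC0, hC⟩ := chain_bound f hu
  have hball : ∀ x : X, ‖x‖ < 1 → ‖f x‖ ≤ C := fun x hx =>
    hC x (by rw [Metric.mem_closedBall, dist_zero_right]; exact hx.le)
  set V : ℝ := sSup ((fun x => (1 - ‖x‖ ^ 2) * ‖f x‖) '' {x : X | ‖x‖ < 1}) with hV
  have hvbdd : BddAbove ((fun x => (1 - ‖x‖ ^ 2) * ‖f x‖) '' {x : X | ‖x‖ < 1}) := by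
    refine ⟨C, ?_⟩
    rintro _ ⟨x, hx, rfl⟩
    have hx' : ‖x‖ < 1 := hx
    have h1 : 1 - ‖x‖ ^ 2 ≤ 1 := by nlinarith [norm_nonneg x]
    have h2 : (0:ℝ) ≤ 1 - ‖x‖ ^ 2 := by nlinarith [norm_nonneg x]
    calc (1 - ‖x‖ ^ 2) * ‖f x‖ ≤ 1 * C :=
          mul_le_mul h1 (hball x hx) (norm_nonneg _) one_pos.le
      _ = C := one_mul C
  have hsbdd : ∀ s : ℝ, 0 ≤ s → s ≤ 1 →
      BddAbove ((fun x => ‖f ((s : ℂ) • x)‖) '' {x : X | ‖x‖ < 1}) := by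
    intro s hs0 hs1
    refine ⟨C, ?_⟩
    rintro _ ⟨x, hx, rfl⟩
    apply hC
    rw [Metric.mem_closedBall, dist_zero_right, norm_smul, Complex.norm_real,
      Real.norm_of_nonneg hs0]
    calc s * ‖x‖ ≤ 1 * 1 := mul_le_mul hs1 hx.le (norm_nonneg x) one_pos.le
      _ = 1 := one_mul 1
  have hvle : ∀ x : X, ‖x‖ < 1 → (1 - ‖x‖ ^ 2) * ‖f x‖ ≤ V := fun x hx =>
    le_csSup hvbdd ⟨x, hx, rfl⟩
  constructor
  · rintro ⟨x₀, hx₀, hvx₀⟩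
    by_cases h1 : ‖x₀‖ < 1
    · set s₀ : ℝ := ‖x₀‖ with hs₀
      have hs : 0 ≤ s₀ := norm_nonneg x₀
      have hpos : 0 < 1 - s₀ ^ 2 := by nlinarith
      have hsne : Set.Nonempty ((fun x => ‖f ((s₀ : ℂ) • x)‖) '' {x : X | ‖x‖ < 1}) :=
        ⟨_, ⟨0, by simp, rfl⟩⟩
      have hle : sSup ((fun x => ‖f ((s₀ : ℂ) • x)‖) '' {x : X | ‖x‖ < 1}) ≤ ‖f x₀‖ := by
        apply csSup_le hsne
        rintro _ ⟨x, hx, rfl⟩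
        have hsx : ‖(s₀ : ℂ) • x‖ ≤ s₀ := by
          rw [norm_smul, Complex.norm_real, Real.norm_of_nonneg hs]
          calc s₀ * ‖x‖ ≤ s₀ * 1 := mul_le_mul_of_nonneg_left hx.le hs
            _ = s₀ := mul_one s₀
        have hsx1 : ‖(s₀ : ℂ) • x‖ < 1 := lt_of_le_of_lt hsx h1
        have hv1 := hvle _ hsx1
        have h2 : (1 - s₀ ^ 2) * ‖f ((s₀ : ℂ) • x)‖
            ≤ (1 - ‖(s₀ : ℂ) • x‖ ^ 2) * ‖f ((s₀ : ℂ) • x)‖ := by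
          apply mul_le_mul_of_nonneg_right _ (norm_nonneg _)
          nlinarith [norm_nonneg ((s₀ : ℂ) • x)]
        have h3 : (1 - s₀ ^ 2) * ‖f ((s₀ : ℂ) • x)‖ ≤ (1 - s₀ ^ 2) * ‖f x₀‖ := by
          linarith [h2, hv1, hvx₀]
        exact le_of_mul_le_mul_left (by linarith) hpos
      have hge : ‖f x₀‖ ≤ sSup ((fun x => ‖f ((s₀ : ℂ) • x)‖) '' {x : X | ‖x‖ < 1}) := by
        rcases eq_or_lt_of_le hs with h0 | h0
        · have hx0 : x₀ = 0 := norm_eq_zero.mp h0.symm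
          apply le_csSup (hsbdd s₀ hs hx₀)
          exact ⟨0, by simp, by simp [hx0]⟩
        · have hx₀mem : x₀ ∈ Metric.ball (0 : X) 1 := by
            rw [Metric.mem_ball, dist_zero_right]; exact h1
          have hcont : ContinuousAt f x₀ :=
            hf.continuousOn.continuousAt (Metric.isOpen_ball.mem_nhds hx₀mem)
          have htend : Tendsto (fun t : ℝ => ‖f ((t : ℂ) • x₀)‖) (𝓝[<] (1 : ℝ))
              (𝓝 ‖f x₀‖) := by
            have hsm : Tendsto (fun t : ℝ => (t : ℂ) • x₀) (𝓝 1) (𝓝 x₀) := by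
              have hc : Continuous (fun t : ℝ => (t : ℂ) • x₀) :=
                Complex.continuous_ofReal.smul continuous_const
              have := hc.tendsto 1
              simpa using this
            exact ((hcont.tendsto.comp hsm).norm).mono_left nhdsWithin_le_nhds
          refine le_of_tendsto htend ?_
          filter_upwards [Ioo_mem_nhdsLT_of_mem
            (show (1 : ℝ) ∈ Set.Ioc 0 1 from ⟨one_pos, le_rfl⟩)] with t ht
          apply le_csSup (hsbdd s₀ hs hx₀)
          refine ⟨((t / s₀ : ℝ) : ℂ) • x₀, ?_, ?_⟩
          · show ‖((t / s₀ : ℝ) : ℂ) • x₀‖ < 1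
            rw [norm_smul, Complex.norm_real, Real.norm_of_nonneg (le_of_lt (div_pos ht.1 h0))]
            rw [← hs₀, div_mul_cancel₀ _ h0.ne']
            exact ht.2
          · show ‖f ((s₀ : ℂ) • (((t / s₀ : ℝ) : ℂ) • x₀))‖ = ‖f ((t : ℂ) • x₀)‖
            rw [smul_smul]
            congr 2
            rw [← Complex.ofReal_mul, mul_div_cancel₀ _ h0.ne']
      have heq : ‖f x₀‖ = sSup ((fun x => ‖f ((s₀ : ℂ) • x)‖) '' {x : X | ‖x‖ < 1}) :=
        le_antisymm hge hle
      exact ⟨s₀, hs, h1, by rw [← hvx₀, heq], x₀, le_rfl, heq⟩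
    · have hx1 : ‖x₀‖ = 1 := le_antisymm hx₀ (not_lt.mp h1)
      have hv0 : V = 0 := by rw [← hvx₀, hx1]; ring
      have hf0 : ‖f 0‖ = 0 := by
        have h := hvle 0 (by simp)
        simp only [norm_zero] at h
        have : (1 - (0:ℝ) ^ 2) * ‖f 0‖ = ‖f 0‖ := by ring
        rw [this] at h
        exact le_antisymm (by linarith [hv0]) (norm_nonneg _)
      have hs0eq : sSup ((fun x => ‖f (((0 : ℝ) : ℂ) • x)‖) '' {x : X | ‖x‖ < 1})
          = ‖f 0‖ := by
        apply le_antisymm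
        · refine csSup_le ⟨_, ⟨0, by simp, rfl⟩⟩ ?_
          rintro _ ⟨x, hx, rfl⟩
          simp
        · exact le_csSup (hsbdd 0 le_rfl zero_le_one) ⟨0, by simp, by simp⟩
      refine ⟨0, le_rfl, one_pos, ?_, 0, by simp, hs0eq.symm⟩
      rw [hv0, hs0eq, hf0]
      ring
  · rintro ⟨s₀, hs0, hs1, hveq, x₁, hx₁, hfx₁⟩
    have hx₁1 : ‖x₁‖ < 1 := lt_of_le_of_lt hx₁ hs1
    refine ⟨x₁, hx₁1.le, ?_⟩
    have hub := hvle x₁ hx₁1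
    have hlb : V ≤ (1 - ‖x₁‖ ^ 2) * ‖f x₁‖ := by
      rw [hveq, ← hfx₁]
      apply mul_le_mul_of_nonneg_right _ (norm_nonneg _)
      nlinarith [norm_nonneg x₁]
    exact le_antisymm hub hlb

/-- a holomorphic function, uniformly continuous on the closed unit ball,
attains its `v`-norm iff there is `s₀ ∈ [0,1)` with `‖f‖_v = (1-s₀²)‖f‖_{s₀}` at which `f`
attains its `s₀`-norm. -/
theorem stmt1 {X Y : Type*} [NormedAddCommGroup X] [NormedSpace ℂ X] [CompleteSpace X]
    [NormedAddCommGroup Y] [NormedSpace ℂ Y] [CompleteSpace Y]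
    (f : X → Y) (hf : DifferentiableOn ℂ f (Metric.ball (0 : X) 1))
    (hu : UniformContinuousOn f (Metric.closedBall (0 : X) 1)) :
    AttainsV f ↔
      ∃ s₀ : ℝ, 0 ≤ s₀ ∧ s₀ < 1 ∧ vNorm f = (1 - s₀ ^ 2) * sNorm s₀ f ∧ AttainsS s₀ f := by
  simp only [AttainsV, AttainsS, vNorm, sNorm]
  exact stmt1' f hf hu
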